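/- Define u : ℍ → ℂ by u(τ) := i·β_{1/2}(−πy/6)·e^{2πiτ/24}, where τ = x + iy. Then for every τ = x + iy ∈ ℍ, 2i·y^{1/2}·conj((1/2)(∂u/∂x + i·∂u/∂y)(τ)) = (1/√6)·e^{−2πiτ/24}. (That is, ξ_{1/2} applied to i·β_{1/2}(−πy/6)·q^{1/24} equals (1/√6)·q^{−1/24}, where ξ_k f := 2i·y^k·conj(∂f/∂τ̄).) -/

import Mathlib

open Complex

/-- `β_{1/2}(−y) = 1 − (i√y/√π) ∫_0^1 t^{−1/2} e^{yt} dt` for `y > 0`: the normalized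
incomplete gamma function `Γ(1/2, −y)/Γ(1/2)` with the convention `√(−y) = i√y`. -/
noncomputable def betaHalfNeg (y : ℝ) : ℂ :=
  1 - Complex.I * (Real.sqrt y : ℂ) / (Real.sqrt Real.pi : ℂ) *
    ((∫ t in (0 : ℝ)..1, t ^ (-(1 / 2) : ℝ) * Real.exp (y * t) : ℝ) : ℂ)

/-- `u(x + iy) = i·β_{1/2}(−πy/6)·q^{1/24}` as a function of the real coordinates
`x` and `y`, where `q^{1/24} = e^{2πiτ/24}` with `τ = x + iy`. -/
noncomputable def uFun (x y : ℝ) : ℂ :=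
  Complex.I * betaHalfNeg (Real.pi * y / 6) *
    Complex.exp (2 * Real.pi * Complex.I * ((x : ℂ) + (y : ℂ) * Complex.I) / 24)

noncomputable def gg (s : ℝ) : ℝ := s ^ (-(1 / 2) : ℝ) * Real.exp s

noncomputable def HH (y : ℝ) : ℝ := ∫ s in (0 : ℝ)..y, gg s

lemma gg_intervalIntegrable (a b : ℝ) : IntervalIntegrable gg MeasureTheory.volume a b :=
  (intervalIntegral.intervalIntegrable_rpow' (by norm_num)).mul_continuousOn
    Real.continuous_exp.continuousOn

lemma HH_hasDerivAt {y : ℝ} (hy : 0 < y) : HasDerivAt HH (gg y) y := by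
  apply intervalIntegral.integral_hasDerivAt_right (gg_intervalIntegrable 0 y)
  · refine ⟨Set.Ioi 0, Ioi_mem_nhds hy, ContinuousOn.aestronglyMeasurable ?_ measurableSet_Ioi⟩
    exact (continuousOn_id.rpow_const (fun t ht => Or.inl (ne_of_gt ht))).mul
      Real.continuous_exp.continuousOn
  · exact ((Real.continuousAt_rpow_const y _ (Or.inl hy.ne')).mul Real.continuous_exp.continuousAt)

lemma sqrt_mul_integral {y : ℝ} (hy : 0 < y) :
    Real.sqrt y * (∫ t in (0 : ℝ)..1, t ^ (-(1 / 2) : ℝ) * Real.exp (y * t)) = HH y := by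
  have h1 : (∫ t in (0 : ℝ)..1, gg (y * t)) = y⁻¹ * HH y := by
    rw [intervalIntegral.integral_comp_mul_left gg hy.ne']
    simp [HH, smul_eq_mul]
  have h2 : (∫ t in (0 : ℝ)..1, gg (y * t)) =
      y ^ (-(1 / 2) : ℝ) * ∫ t in (0 : ℝ)..1, t ^ (-(1 / 2) : ℝ) * Real.exp (y * t) := by
    rw [← intervalIntegral.integral_const_mul]
    apply intervalIntegral.integral_congr
    intro t ht
    rw [Set.uIcc_of_le (by norm_num : (0:ℝ) ≤ 1)] at ht
    simp only [gg]
    rw [Real.mul_rpow hy.le ht.1]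
    ring
  have hrw : y ^ (-(1 / 2) : ℝ) = (Real.sqrt y)⁻¹ := by
    rw [Real.rpow_neg hy.le, ← Real.sqrt_eq_rpow]
  have hs : Real.sqrt y ≠ 0 := by positivity
  have hss : Real.sqrt y * Real.sqrt y = y := Real.mul_self_sqrt hy.le
  rw [hrw] at h2
  have hF : (∫ t in (0 : ℝ)..1, t ^ (-(1 / 2) : ℝ) * Real.exp (y * t)) =
      Real.sqrt y * (y⁻¹ * HH y) := by
    rw [← h1, h2]
    field_simp
  rw [hF]
  field_simp
  linear_combination HH y * hss

lemma betaEq {w : ℝ} (hw : 0 < w) :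
    betaHalfNeg w = 1 - Complex.I / (Real.sqrt Real.pi : ℂ) * (HH w : ℂ) := by
  unfold betaHalfNeg
  rw [← sqrt_mul_integral hw]
  push_cast
  ring

theorem xi_half_of_beta_term (x y : ℝ) (hy : 0 < y) :
    2 * Complex.I * ((Real.sqrt y : ℝ) : ℂ) *
        (starRingEnd ℂ) ((1 / 2 : ℂ) *
          (deriv (fun x' : ℝ => uFun x' y) x + Complex.I * deriv (fun y' : ℝ => uFun x y') y)) =
      (1 / (Real.sqrt 6 : ℂ)) *
        Complex.exp (-(2 * Real.pi * Complex.I * ((x : ℂ) + (y : ℂ) * Complex.I)) / 24) := by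
  have hw : 0 < Real.pi * y / 6 := by positivity
  -- x-derivative
  have hx1 : HasDerivAt (fun x' : ℝ => ((x' : ℂ) + (y : ℂ) * Complex.I)) 1 x := by
    simpa using (Complex.ofRealCLM.hasDerivAt (x := x)).add_const ((y : ℂ) * Complex.I)
  have hxE : HasDerivAt (fun x' : ℝ =>
      Complex.I * betaHalfNeg (Real.pi * y / 6) *
        Complex.exp (2 * Real.pi * Complex.I * ((x' : ℂ) + (y : ℂ) * Complex.I) / 24))
      (Complex.I * betaHalfNeg (Real.pi * y / 6) *
        (Complex.exp (2 * Real.pi * Complex.I * ((x : ℂ) + (y : ℂ) * Complex.I) / 24) *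
          (2 * (Real.pi : ℂ) * Complex.I * 1 / 24))) x :=
    (((hx1.const_mul (2 * (Real.pi : ℂ) * Complex.I)).div_const 24).cexp).const_mul _
  -- y-derivative of beta part
  have hH : HasDerivAt (fun y' : ℝ => HH (Real.pi * y' / 6))
      (gg (Real.pi * y / 6) * (Real.pi / 6)) y := by
    have h2 : HasDerivAt (fun y' : ℝ => Real.pi * y' / 6) (Real.pi / 6) y := by
      simpa using ((hasDerivAt_id y).const_mul Real.pi).div_const 6
    exact (HH_hasDerivAt hw).comp y h2
  have hHC : HasDerivAt (fun y' : ℝ => ((HH (Real.pi * y' / 6) : ℝ) : ℂ))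
      ((gg (Real.pi * y / 6) * (Real.pi / 6) : ℝ) : ℂ) y := hH.ofReal_comp
  have hB : HasDerivAt (fun y' : ℝ => betaHalfNeg (Real.pi * y' / 6))
      (-(Complex.I / (Real.sqrt Real.pi : ℂ) *
        ((gg (Real.pi * y / 6) * (Real.pi / 6) : ℝ) : ℂ))) y := by
    have h0 : HasDerivAt (fun y' : ℝ =>
        1 - Complex.I / (Real.sqrt Real.pi : ℂ) * ((HH (Real.pi * y' / 6) : ℝ) : ℂ))
        (-(Complex.I / (Real.sqrt Real.pi : ℂ) *
          ((gg (Real.pi * y / 6) * (Real.pi / 6) : ℝ) : ℂ))) y :=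
      (hHC.const_mul _).const_sub 1
    apply h0.congr_of_eventuallyEq
    filter_upwards [eventually_gt_nhds hy] with y' hy'
    exact betaEq (by positivity)
  have hy1 : HasDerivAt (fun y' : ℝ => ((x : ℂ) + (y' : ℂ) * Complex.I)) Complex.I y := by
    simpa using ((Complex.ofRealCLM.hasDerivAt (x := y)).mul_const Complex.I).const_add (x : ℂ)
  have hyE : HasDerivAt (fun y' : ℝ =>
      Complex.exp (2 * Real.pi * Complex.I * ((x : ℂ) + (y' : ℂ) * Complex.I) / 24))
      (Complex.exp (2 * Real.pi * Complex.I * ((x : ℂ) + (y : ℂ) * Complex.I) / 24) *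
        (2 * (Real.pi : ℂ) * Complex.I * Complex.I / 24)) y :=
    ((hy1.const_mul (2 * (Real.pi : ℂ) * Complex.I)).div_const 24).cexp
  have hyU : HasDerivAt (fun y' : ℝ => uFun x y')
      (Complex.I * (-(Complex.I / (Real.sqrt Real.pi : ℂ) *
          ((gg (Real.pi * y / 6) * (Real.pi / 6) : ℝ) : ℂ))) *
        Complex.exp (2 * Real.pi * Complex.I * ((x : ℂ) + (y : ℂ) * Complex.I) / 24) +
        Complex.I * betaHalfNeg (Real.pi * y / 6) *
          (Complex.exp (2 * Real.pi * Complex.I * ((x : ℂ) + (y : ℂ) * Complex.I) / 24) *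
            (2 * (Real.pi : ℂ) * Complex.I * Complex.I / 24))) y := by
    simpa [uFun, Pi.mul_def] using (hB.const_mul Complex.I).mul hyE
  have hxU : HasDerivAt (fun x' : ℝ => uFun x' y)
      (Complex.I * betaHalfNeg (Real.pi * y / 6) *
        (Complex.exp (2 * Real.pi * Complex.I * ((x : ℂ) + (y : ℂ) * Complex.I) / 24) *
          (2 * (Real.pi : ℂ) * Complex.I * 1 / 24))) x := by
    simpa [uFun] using hxE
  rw [hxU.deriv, hyU.deriv]
  -- simplify the inner expression
  have inner : (1 / 2 : ℂ) *
      ((Complex.I * betaHalfNeg (Real.pi * y / 6) *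
        (Complex.exp (2 * Real.pi * Complex.I * ((x : ℂ) + (y : ℂ) * Complex.I) / 24) *
          (2 * (Real.pi : ℂ) * Complex.I * 1 / 24))) +
        Complex.I * (Complex.I * (-(Complex.I / (Real.sqrt Real.pi : ℂ) *
          ((gg (Real.pi * y / 6) * (Real.pi / 6) : ℝ) : ℂ))) *
        Complex.exp (2 * Real.pi * Complex.I * ((x : ℂ) + (y : ℂ) * Complex.I) / 24) +
        Complex.I * betaHalfNeg (Real.pi * y / 6) *
          (Complex.exp (2 * Real.pi * Complex.I * ((x : ℂ) + (y : ℂ) * Complex.I) / 24) *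
            (2 * (Real.pi : ℂ) * Complex.I * Complex.I / 24)))) =
      Complex.I * ((Real.pi / (12 * Real.sqrt Real.pi) * gg (Real.pi * y / 6) : ℝ) : ℂ) *
        Complex.exp (2 * Real.pi * Complex.I * ((x : ℂ) + (y : ℂ) * Complex.I) / 24) := by
    push_cast
    set E := Complex.exp (2 * Real.pi * Complex.I * ((x : ℂ) + (y : ℂ) * Complex.I) / 24)
    set b := betaHalfNeg (Real.pi * y / 6)
    linear_combination (b * E * (Real.pi : ℂ) / 24 * Complex.I ^ 2 -
      (gg (Real.pi * y / 6) : ℂ) * (Real.pi : ℂ) * E * Complex.I /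
        (12 * (Real.sqrt Real.pi : ℂ))) * Complex.I_sq
  rw [inner]
  -- push the conjugation through
  have key : (starRingEnd ℂ)
      (Complex.exp (2 * Real.pi * Complex.I * ((x : ℂ) + (y : ℂ) * Complex.I) / 24)) *
      ((Real.exp (Real.pi * y / 6) : ℝ) : ℂ) =
      Complex.exp (-(2 * Real.pi * Complex.I * ((x : ℂ) + (y : ℂ) * Complex.I)) / 24) := by
    rw [← Complex.exp_conj, Complex.ofReal_exp, ← Complex.exp_add]
    congr 1
    simp only [map_div₀, map_mul, map_add, map_ofNat, Complex.conj_I, Complex.conj_ofReal]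
    push_cast
    linear_combination ((Real.pi : ℂ) * (y : ℂ) / 6) * Complex.I_sq
  simp only [map_mul, Complex.conj_I, Complex.conj_ofReal]
  rw [← key]
  have hA : (Real.pi * y / 6) ^ (-(1 / 2) : ℝ) =
      Real.sqrt 6 / (Real.sqrt Real.pi * Real.sqrt y) := by
    rw [Real.rpow_neg hw.le, ← Real.sqrt_eq_rpow, Real.sqrt_div (by positivity : (0:ℝ) ≤ Real.pi * y),
      Real.sqrt_mul Real.pi_pos.le, inv_div]
  have hsp : Real.sqrt Real.pi ≠ 0 := by positivity
  have hsy : Real.sqrt y ≠ 0 := by positivity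
  have hs6 : Real.sqrt 6 ≠ 0 := by positivity
  have hpp : Real.sqrt Real.pi * Real.sqrt Real.pi = Real.pi := Real.mul_self_sqrt Real.pi_pos.le
  have h66 : Real.sqrt 6 * Real.sqrt 6 = 6 := Real.mul_self_sqrt (by norm_num)
  have hreal : 2 * Real.sqrt y * (Real.pi / (12 * Real.sqrt Real.pi) * gg (Real.pi * y / 6)) =
      (1 / Real.sqrt 6) * Real.exp (Real.pi * y / 6) := by
    have : gg (Real.pi * y / 6) =
        Real.sqrt 6 / (Real.sqrt Real.pi * Real.sqrt y) * Real.exp (Real.pi * y / 6) := by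
      rw [gg, hA]
    rw [this]
    field_simp
    linear_combination (2 * Real.pi) * h66 -
      12 * hpp
  have hrealC : (2 : ℂ) * (Real.sqrt y : ℂ) *
      ((Real.pi / (12 * Real.sqrt Real.pi) * gg (Real.pi * y / 6) : ℝ) : ℂ) =
      (1 / (Real.sqrt 6 : ℂ)) * ((Real.exp (Real.pi * y / 6) : ℝ) : ℂ) := by
    exact_mod_cast congrArg (Complex.ofReal) hreal
  set c := (starRingEnd ℂ)
    (Complex.exp (2 * Real.pi * Complex.I * ((x : ℂ) + (y : ℂ) * Complex.I) / 24))
  set r := ((Real.pi / (12 * Real.sqrt Real.pi) * gg (Real.pi * y / 6) : ℝ) : ℂ)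
  linear_combination c * hrealC - 2 * (Real.sqrt y : ℂ) * r * c * Complex.I_sq
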